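/- For all real numbers s with 0 < s < π/3 and sin s ≠ 0, 2cos(2s)+1 ≠ 0, one has the trigonometric identity: (tan(π/6 - s) - tan(s + π/6) + cot s)^2·(2 - r) + (tan^2(π/6 - s) + tan^2(s + π/6) + cot^2 s)^2 - 3(tan^2(π/6 - s) + tan^2(s + π/6) + cot^2 s) = (9/8)·csc^4(s)·(r·cos(12s) - r + 28·cos(6s) + 44)/(2cos(2s)+1)^4 for every real r. -/

import Mathlib

open Real

theorem stmt_6 (s : ℝ) (hs : s ∈ Set.Ioo 0 (π / 3))
    (hsin : Real.sin s ≠ 0) (hden : 2 * Real.cos (2 * s) + 1 ≠ 0) (r : ℝ) :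
    (Real.tan (π / 6 - s) - Real.tan (s + π / 6) + Real.cos s / Real.sin s) ^ 2 * (2 - r)
      + (Real.tan (π / 6 - s) ^ 2 + Real.tan (s + π / 6) ^ 2
          + (Real.cos s / Real.sin s) ^ 2) ^ 2
      - 3 * (Real.tan (π / 6 - s) ^ 2 + Real.tan (s + π / 6) ^ 2
          + (Real.cos s / Real.sin s) ^ 2)
    = (9 / 8) * (Real.sin s)⁻¹ ^ 4
        * (r * Real.cos (12 * s) - r + 28 * Real.cos (6 * s) + 44)
        / (2 * Real.cos (2 * s) + 1) ^ 4 := by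
  obtain ⟨hs0, hs1⟩ := hs
  set x := Real.sin s with hxdef
  set c := Real.cos s with hcdef
  have hpyth : x ^ 2 + c ^ 2 = 1 := Real.sin_sq_add_cos_sq s
  have ht : Real.sqrt 3 ^ 2 = 3 := Real.sq_sqrt (by norm_num)
  have hE : 2 * Real.cos (2 * s) + 1 = 3 - 4 * x ^ 2 := by
    rw [Real.cos_two_mul]; linear_combination 4 * hpyth
  have hden' : (3 : ℝ) - 4 * x ^ 2 ≠ 0 := hE ▸ hden
  have h1 : Real.cos (π / 6 - s) ≠ 0 := by
    have := Real.pi_pos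
    apply ne_of_gt; apply Real.cos_pos_of_mem_Ioo; constructor <;> nlinarith
  have h2 : Real.cos (s + π / 6) ≠ 0 := by
    have := Real.pi_pos
    apply ne_of_gt; apply Real.cos_pos_of_mem_Ioo; constructor <;> nlinarith
  have e1 : Real.cos (π / 6 - s) = Real.sqrt 3 / 2 * c + 1 / 2 * x := by
    rw [Real.cos_sub, Real.cos_pi_div_six, Real.sin_pi_div_six]
  have e2 : Real.sin (π / 6 - s) = 1 / 2 * c - Real.sqrt 3 / 2 * x := by
    rw [Real.sin_sub, Real.cos_pi_div_six, Real.sin_pi_div_six]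
  have e3 : Real.cos (s + π / 6) = Real.sqrt 3 / 2 * c - 1 / 2 * x := by
    rw [Real.cos_add, Real.cos_pi_div_six, Real.sin_pi_div_six]; ring
  have e4 : Real.sin (s + π / 6) = 1 / 2 * c + Real.sqrt 3 / 2 * x := by
    rw [Real.sin_add, Real.cos_pi_div_six, Real.sin_pi_div_six]; ring
  have h1' : Real.sqrt 3 / 2 * c + 1 / 2 * x ≠ 0 := e1 ▸ h1
  have h2' : Real.sqrt 3 / 2 * c - 1 / 2 * x ≠ 0 := e3 ▸ h2
  have hA : Real.tan (π / 6 - s) - Real.tan (s + π / 6) + c / x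
      = 3 * c * (1 - 4 * x ^ 2) / (x * (3 - 4 * x ^ 2)) := by
    rw [Real.tan_eq_sin_div_cos, Real.tan_eq_sin_div_cos, e1, e2, e3, e4]
    rw [div_sub_div _ _ h1' h2', div_add_div _ _ (mul_ne_zero h1' h2') hsin,
      div_eq_div_iff (mul_ne_zero (mul_ne_zero h1' h2') hsin)
        (mul_ne_zero hsin hden')]
    linear_combination ((-3/2 : ℝ) * x^3 * c + 2 * x^3 * c^3 + 2 * x^5 * c) * ht
      + (6 * x^3 * c) * hpyth
  have hA2 : (Real.tan (π / 6 - s) - Real.tan (s + π / 6) + c / x) ^ 2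
      = 9 * (1 - x ^ 2) * (1 - 4 * x ^ 2) ^ 2 / (x ^ 2 * (3 - 4 * x ^ 2) ^ 2) := by
    rw [hA, div_pow, div_eq_div_iff (pow_ne_zero 2 (mul_ne_zero hsin hden'))
      (mul_ne_zero (pow_ne_zero 2 hsin) (pow_ne_zero 2 hden'))]
    linear_combination (9 * (1 - 4*x^2)^2 * x^2 * (3 - 4*x^2)^2) * hpyth
  have hB : Real.tan (π / 6 - s) ^ 2 + Real.tan (s + π / 6) ^ 2 + (c / x) ^ 2
      = (6 + 32 * x ^ 2 - 32 * x ^ 4) / (3 - 4 * x ^ 2) ^ 2 + (1 - x ^ 2) / x ^ 2 := by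
    rw [Real.tan_eq_sin_div_cos, Real.tan_eq_sin_div_cos, e1, e2, e3, e4,
      div_pow, div_pow, div_pow,
      div_add_div _ _ (pow_ne_zero 2 h1') (pow_ne_zero 2 h2'),
      div_add_div _ _ (mul_ne_zero (pow_ne_zero 2 h1') (pow_ne_zero 2 h2'))
        (pow_ne_zero 2 hsin),
      div_add_div _ _ (pow_ne_zero 2 hden') (pow_ne_zero 2 hsin),
      div_eq_div_iff
        (mul_ne_zero (mul_ne_zero (pow_ne_zero 2 h1') (pow_ne_zero 2 h2'))
          (pow_ne_zero 2 hsin))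
        (mul_ne_zero (pow_ne_zero 2 hden') (pow_ne_zero 2 hsin))]
    linear_combination (((-27/16)*x^2*c^4 + (-9/16)*x^2*c^4*(Real.sqrt 3)^2 + (27/16)*x^2*c^6 + (9/16)*x^2*c^6*(Real.sqrt 3)^2 + (9/8)*x^4*c^2 + (81/16)*x^4*c^4 + (27/16)*x^4*c^4*(Real.sqrt 3)^2 + (-9/2)*x^4*c^6 + (-3/2)*x^4*c^6*(Real.sqrt 3)^2 + (9/2)*x^6*c^2 + (9/8)*x^6*c^2*(Real.sqrt 3)^2 + (-27/2)*x^6*c^4 + (-9/2)*x^6*c^4*(Real.sqrt 3)^2 + (3)*x^6*c^6 + (1)*x^6*c^6*(Real.sqrt 3)^2 + (9/8)*x^8 + (-12)*x^8*c^2 + (-3)*x^8*c^2*(Real.sqrt 3)^2 + (9)*x^8*c^4 + (3)*x^8*c^4*(Real.sqrt 3)^2 + (-3)*x^10 + (8)*x^10*c^2 + (2)*x^10*c^2*(Real.sqrt 3)^2 + (2)*x^12 : ℝ)) * ht + (((81/16)*x^2*c^4 + (-27/8)*x^4*c^2 + (-27/2)*x^4*c^4 + (9/16)*x^6 + (-18)*x^6*c^2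 + (9)*x^6*c^4 + (-9/2)*x^8 + (18)*x^8*c^2 + (9)*x^10 : ℝ)) * hpyth
  have hC6 : Real.cos (6 * s) = 4 * (1 - 2 * x ^ 2) ^ 3 - 3 * (1 - 2 * x ^ 2) := by
    have h6 : (6 : ℝ) * s = 3 * (2 * s) := by ring
    rw [h6, Real.cos_three_mul, Real.cos_two_mul]
    linear_combination (8 * ((2*c^2-1)^2 + (2*c^2-1)*(1-2*x^2) + (1-2*x^2)^2) - 6) * hpyth
  have hC12 : Real.cos (12 * s)
      = 2 * (4 * (1 - 2 * x ^ 2) ^ 3 - 3 * (1 - 2 * x ^ 2)) ^ 2 - 1 := by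
    have h12 : (12 : ℝ) * s = 2 * (6 * s) := by ring
    rw [h12, Real.cos_two_mul, hC6]
  rw [hA2, hB, hC12, hC6, hE]
  rw [inv_pow, ← one_div]
  have hden'' : (3 : ℝ) - x ^ 2 * 4 ≠ 0 := by rw [mul_comm]; exact hden'
  field_simp
  ring
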